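/- Let K be an imaginary quadratic field of discriminant d_K with O_K = ℤτ_K + ℤ, let 𝔫 be a nonzero proper ideal of O_K with canonical basis 𝔫 = ℤ(a₁τ_K + a₂) + ℤN (so 0 < a₁ ≤ N, 0 ≤ a₂ < N, a₁ ∣ N, a₁ ∣ a₂, and N is the smallest positive integer in 𝔫). Let Q = ax² + bxy + cy² be a primitive positive definite form of discriminant d_K with gcd(N,a)=1, and let d_Q be the unique integer with d_Q ≡ −a₁(b+b_K)/2 + a₂ (mod N), d_Q ≡ 0 (mod a), and 0 ≤ d_Q + a₁(b+b_K)/2 < Na. Then with 𝔪 = ℤ(−a·conj(ω_Q)) + ℤa, the product ideal satisfies 𝔫𝔪 = ℤ(a₁(−a·conj(ω_Q)) + d_Q) + ℤ(Na). -/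

import Mathlib

open NumberField

/-- Let `K` be an imaginary quadratic field of discriminant `d_K`
with `O_K = ℤτ_K + ℤ`, `τ_K = (−b_K + √d_K)/2`, and let `𝔫` be a nonzero proper ideal
of `O_K` with canonical basis `𝔫 = ℤ(a₁τ_K + a₂) + ℤN`.  Let `Q = ax² + bxy + cy²` be a
primitive positive definite form of discriminant `d_K` with `gcd(N,a) = 1`, and `d_Q`
the unique integer with `d_Q ≡ −a₁(b+b_K)/2 + a₂ (mod N)`, `a ∣ d_Q`, and
`0 ≤ d_Q + a₁(b+b_K)/2 < Na`.  Then with `𝔪 = ℤ(−a·conj(ω_Q)) + ℤa`, one has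
`𝔫𝔪 = ℤ(a₁(−a·conj(ω_Q)) + d_Q) + ℤ(Na)`. -/
theorem stmt6 (K : Type*) [Field K] [NumberField K]
    (hdeg : Module.finrank ℚ K = 2) (hneg : NumberField.discr K < 0)
    (ι : K →+* ℂ)
    (b_K : ℤ) (τ : K)
    (hτ : (2 : ℂ) * ι τ = -(b_K : ℂ) + Complex.I * Real.sqrt (-(NumberField.discr K : ℝ)))
    (hOK : ∀ x : K, IsIntegral ℤ x ↔ x ∈ Submodule.span ℤ ({τ, 1} : Set K))
    (𝔫 : Ideal (𝓞 K)) (h𝔫0 : 𝔫 ≠ ⊥) (h𝔫1 : 𝔫 ≠ ⊤)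
    (N a₁ a₂ : ℤ)
    (hleast : IsLeast {n : ℤ | 0 < n ∧ ((n : ℤ) : 𝓞 K) ∈ 𝔫} N)
    (ha₁ : 0 < a₁) (ha₁N : a₁ ≤ N) (ha₂0 : 0 ≤ a₂) (ha₂N : a₂ < N)
    (hd₁ : a₁ ∣ N) (hd₂ : a₁ ∣ a₂)
    (hbasis𝔫 : algebraMap (𝓞 K) K '' (𝔫 : Set (𝓞 K))
      = (Submodule.span ℤ ({(a₁ : K) * τ + (a₂ : K), (N : K)} : Set K) : Set K))
    (a b c : ℤ) (hpos : 0 < a)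
    (hprim : Int.gcd a (Int.gcd b c) = 1)
    (hdisc : b ^ 2 - 4 * a * c = NumberField.discr K)
    (hgcd : Int.gcd N a = 1)
    (ω ωbar : K)
    (hroot : (a : K) * ω ^ 2 + (b : K) * ω + (c : K) = 0)
    (him : 0 < (ι ω).im)
    (hconj : ι ωbar = (starRingEnd ℂ) (ι ω))
    (e : ℤ) (he : 2 * e = b + b_K)
    (d_Q : ℤ)
    (hdQ1 : d_Q ≡ -a₁ * e + a₂ [ZMOD N])
    (hdQ2 : a ∣ d_Q)
    (hdQ3 : 0 ≤ d_Q + a₁ * e) (hdQ4 : d_Q + a₁ * e < N * a)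
    (𝔪 : Ideal (𝓞 K))
    (h𝔪 : algebraMap (𝓞 K) K '' (𝔪 : Set (𝓞 K))
      = (Submodule.span ℤ ({-(a : K) * ωbar, (a : K)} : Set K) : Set K)) :
    algebraMap (𝓞 K) K '' ((𝔫 * 𝔪 : Ideal (𝓞 K)) : Set (𝓞 K))
      = (Submodule.span ℤ
          ({(a₁ : K) * (-(a : K) * ωbar) + (d_Q : K), ((N * a : ℤ) : K)} : Set K) : Set K) := by
  have hι : Function.Injective ι := ι.injective
  set d : ℤ := NumberField.discr K with hd_def
  have hb : b = 2*e - b_K := by omega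
  subst hb
  have hdR : (d:ℝ) < 0 := by exact_mod_cast hneg
  set r : ℝ := Real.sqrt (-(d:ℝ)) with hr_def
  have hr_pos : 0 < r := Real.sqrt_pos.mpr (by linarith)
  have hr2 : (r:ℂ)^2 = -(d:ℂ) := by
    rw [← Complex.ofReal_pow, Real.sq_sqrt (by linarith : (0:ℝ) ≤ -(d:ℝ))]
    push_cast; ring
  have hI2 : (Complex.I * (r:ℂ))^2 = (d:ℂ) := by
    rw [mul_pow, Complex.I_sq, hr2]; ring
  -- τ quadratic relation
  have hτsq : τ * τ = -(b_K : K) * τ - ((a*c - e^2 + e*b_K : ℤ) : K) := by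
    apply hι
    have hz : ι τ = (-(b_K:ℂ) + Complex.I * (r:ℂ))/2 := by linear_combination hτ/2
    have hdC : ((d:ℤ):ℂ) = ((2*e - b_K:ℤ):ℂ)^2 - 4*(a:ℂ)*(c:ℂ) := by
      rw [← hdisc]; push_cast; ring
    rw [map_mul, map_sub, map_mul, map_neg, map_intCast, map_intCast, hz]
    push_cast at hdC ⊢
    linear_combination hI2/4 + hdC/4
  -- the key identity -a ωbar = τ + e
  have hωC : 2*(a:ℂ)*(ι ω) = -((2*e - b_K:ℤ):ℂ) + Complex.I * (r:ℂ) := by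
    have hw : (a:ℂ) * (ι ω)^2 + ((2*e-b_K:ℤ):ℂ) * (ι ω) + (c:ℂ) = 0 := by
      have := congrArg ι hroot
      simpa [map_add, map_mul, map_pow, map_intCast, map_ofNat] using this
    have hdC : ((d:ℤ):ℂ) = ((2*e - b_K:ℤ):ℂ)^2 - 4*(a:ℂ)*(c:ℂ) := by
      rw [← hdisc]; push_cast; ring
    have hsq : (2*(a:ℂ)*(ι ω) + ((2*e-b_K:ℤ):ℂ))^2 = (Complex.I * (r:ℂ))^2 := by
      rw [hI2]
      push_cast at hdC hw ⊢
      linear_combination 4*(a:ℂ)*hw - hdC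
    rcases sq_eq_sq_iff_eq_or_eq_neg.mp hsq with h | h
    · linear_combination h
    · exfalso
      have h1 : (2*(a:ℂ)*(ι ω) + ((2*e-b_K:ℤ):ℂ)).im = 2*(a:ℝ)*(ι ω).im := by
        simp [Complex.add_im, Complex.mul_im]
      have h2 : (-(Complex.I * (r:ℂ))).im = -r := by simp
      rw [h, h2] at h1
      have ha : (0:ℝ) < (a:ℝ) := by exact_mod_cast hpos
      nlinarith
  have hmeq : -(a:K) * ωbar = τ + (e:K) := by
    apply hι
    have hwbar : 2*(a:ℂ)*(ι ωbar) = -((2*e-b_K:ℤ):ℂ) - Complex.I*(r:ℂ) := by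
      rw [hconj]
      have h3 := congrArg (starRingEnd ℂ) hωC
      simp only [map_mul, map_add, map_neg, map_intCast, Complex.conj_I,
        Complex.conj_ofReal, map_ofNat] at h3
      linear_combination h3
    have h2 : (2:ℂ) * (ι (-(a:K)*ωbar)) = (2:ℂ) * (ι (τ + (e:K))) := by
      rw [map_mul, map_neg, map_intCast, map_add, map_intCast]
      push_cast at hwbar ⊢
      linear_combination -hwbar - hτ
    exact mul_left_cancel₀ two_ne_zero h2
  -- linear independence of τ, 1 over ℤ
  have hindep : ∀ x y : ℤ, (x:K)*τ + (y:K) = 0 → x = 0 ∧ y = 0 := by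
    intro x y h
    have h' : (x:ℂ) * ι τ + (y:ℂ) = 0 := by
      have := congrArg ι h
      simpa [map_add, map_mul, map_intCast] using this
    have him2 : (ι τ).im = r/2 := by
      have := congrArg Complex.im hτ
      simp [Complex.mul_im, Complex.add_im] at this
      linarith
    have hx : (x:ℝ) * (r/2) = 0 := by
      have := congrArg Complex.im h'
      simpa [Complex.add_im, Complex.mul_im, him2] using this
    have hx0 : x = 0 := by
      have : (x:ℝ) = 0 := by
        rcases mul_eq_zero.mp hx with h | h
        · exact h
        · linarith
      exact_mod_cast this
    subst hx0
    simp at h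
    exact ⟨rfl, by exact_mod_cast h⟩
  have hτsq' := hτsq
  push_cast at hτsq'
  -- cast helper
  have castK : ∀ {x y : ℤ}, x = y → ((x:ℤ):K) = ((y:ℤ):K) := fun h => by rw [h]
  -- integer bookkeeping
  obtain ⟨s, hs⟩ := hd₂
  subst hs
  obtain ⟨n, hn⟩ := hd₁
  subst hn
  have ha₁0 : a₁ ≠ 0 := ne_of_gt ha₁
  have hcop : IsCoprime (a₁*n) a := Int.isCoprime_iff_gcd_eq_one.mpr hgcd
  have hcopn : IsCoprime n a := hcop.of_isCoprime_of_dvd_left ⟨a₁, mul_comm _ _⟩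
  have hcopa₁ : IsCoprime a₁ a := hcop.of_isCoprime_of_dvd_left ⟨n, rfl⟩
  obtain ⟨k1, hk1⟩ := hdQ1.dvd
  have ha₁dQ : a₁ ∣ d_Q := ⟨-e + s - n*k1, by linear_combination -hk1⟩
  obtain ⟨d', hd'⟩ := hcopa₁.mul_dvd ha₁dQ hdQ2
  -- τ is integral; fix a preimage
  have hτint : IsIntegral ℤ τ := (hOK τ).mpr (Submodule.subset_span (by simp))
  have mem_n : ∀ x : K, x ∈ Submodule.span ℤ
      ({(a₁:K)*τ + ((a₁*s:ℤ):K), ((a₁*n:ℤ):K)} : Set K) →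
      ∃ y ∈ 𝔫, algebraMap (𝓞 K) K y = x := by
    intro x hx
    have : x ∈ algebraMap (𝓞 K) K '' (𝔫 : Set (𝓞 K)) := by rw [hbasis𝔫]; exact hx
    exact this
  rw [hmeq] at h𝔪
  have mem_m : ∀ x : K, x ∈ Submodule.span ℤ ({τ + (e:K), (a:K)} : Set K) →
      ∃ y ∈ 𝔪, algebraMap (𝓞 K) K y = x := by
    intro x hx
    have : x ∈ algebraMap (𝓞 K) K '' (𝔪 : Set (𝓞 K)) := by rw [h𝔪]; exact hx
    exact this
  obtain ⟨gu, hgu𝔫, hgu⟩ := mem_n _ (Submodule.subset_span (Set.mem_insert _ _))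
  obtain ⟨gN, hgN𝔫, hgN⟩ := mem_n _ (Submodule.subset_span (Set.mem_insert_of_mem _ rfl))
  obtain ⟨gμ, hgμ𝔪, hgμ⟩ := mem_m _ (Submodule.subset_span (Set.mem_insert _ _))
  obtain ⟨ga, hga𝔪, hga⟩ := mem_m _ (Submodule.subset_span (Set.mem_insert_of_mem _ rfl))
  -- key divisibility coming from 𝔫 being an ideal
  have hkey : (a₁*n:ℤ) ∣ a₁*(s^2 - b_K*s + (a*c - e^2 + e*b_K)) := by
    have hτumem : τ * ((a₁:K)*τ + ((a₁*s:ℤ):K)) ∈ Submodule.span ℤ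
        ({(a₁:K)*τ + ((a₁*s:ℤ):K), ((a₁*n:ℤ):K)} : Set K) := by
      have himg : τ * ((a₁:K)*τ + ((a₁*s:ℤ):K)) ∈ algebraMap (𝓞 K) K '' (𝔫 : Set (𝓞 K)) := by
        refine ⟨(show 𝓞 K from ⟨τ, hτint⟩) * gu, Ideal.mul_mem_left _ _ hgu𝔫, ?_⟩
        rw [map_mul, hgu]; rfl
      rw [hbasis𝔫] at himg
      exact himg
    obtain ⟨m, k, hmk⟩ := Submodule.mem_span_pair.mp hτumem
    have heq : ((m*a₁ - a₁*s + a₁*b_K : ℤ):K)*τ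
        + ((m*(a₁*s) + k*(a₁*n) + a₁*(a*c - e^2 + e*b_K):ℤ):K) = 0 := by
      simp only [zsmul_eq_mul] at hmk
      push_cast at hmk ⊢
      linear_combination hmk + (a₁:K)*hτsq'
    obtain ⟨h1, h2⟩ := hindep _ _ heq
    have hm : m = s - b_K := by
      have h3 : a₁*(m - s + b_K) = 0 := by linear_combination h1
      rcases mul_eq_zero.mp h3 with h | h
      · exact absurd h ha₁0
      · omega
    rw [hm] at h2
    exact ⟨-k, by linear_combination h2⟩
  obtain ⟨k0, hk0⟩ := hkey
  -- the four divisibilities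
  have hw₁ : (a₁*n*a:ℤ) ∣ d_Q*(s+e-b_K) + a₁*a*c := by
    refine hcop.mul_dvd ⟨k0 - k1*(s+e-b_K), by linear_combination hk0 - (s+e-b_K)*hk1⟩
      ⟨d'*(s+e-b_K)*a₁ + a₁*c, ?_⟩
    linear_combination (s+e-b_K)*hd'
  obtain ⟨t₁, ht₁⟩ := hw₁
  obtain ⟨β, α, hβα⟩ := hcopn
  have hδ : (a₁*n*a:ℤ) ∣ α*a*(a₁*s) + β*((a₁*n))*e - (a₁*e + d_Q) := by
    refine hcop.mul_dvd ⟨β*(e-s) + k1, by linear_combination (a₁*s)*hβα + hk1⟩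
      ⟨α*(a₁*s) - α*(a₁*e) - a₁*d', ?_⟩
    linear_combination (a₁*e)*hβα - hd'
  obtain ⟨γ, hγ⟩ := hδ
  -- cast the integer identities into K
  have hk1K := castK hk1; push_cast at hk1K
  have hd'K := castK hd'; push_cast at hd'K
  have ht₁K := castK ht₁; push_cast at ht₁K
  have hβαK := castK hβα; push_cast at hβαK
  have hγK := castK hγ; push_cast at hγK
  -- the target span
  rw [hmeq]
  set g : K := (a₁:K) * (τ + (e:K)) + (d_Q:K) with hg_def
  set NA : K := ((a₁*n*a : ℤ):K) with hNA_def
  set T : Submodule ℤ K := Submodule.span ℤ ({g, NA} : Set K) with hT_def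
  -- the four products lie in T
  have hP1 : ((a₁:K)*τ + ((a₁*s:ℤ):K)) * (τ + (e:K)) ∈ T := by
    refine Submodule.mem_span_pair.mpr ⟨s+e-b_K, -t₁, ?_⟩
    simp only [zsmul_eq_mul, hg_def, hNA_def]
    push_cast
    linear_combination -(a₁:K)*hτsq' + ht₁K
  have hP2 : ((a₁:K)*τ + ((a₁*s:ℤ):K)) * (a:K) ∈ T := by
    refine Submodule.mem_span_pair.mpr ⟨a, k1, ?_⟩
    simp only [zsmul_eq_mul, hg_def, hNA_def]
    push_cast
    linear_combination -(a:K)*hk1K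
  have hP3 : ((a₁*n:ℤ):K) * (τ + (e:K)) ∈ T := by
    refine Submodule.mem_span_pair.mpr ⟨n, -d', ?_⟩
    simp only [zsmul_eq_mul, hg_def, hNA_def]
    push_cast
    linear_combination (n:K)*hd'K
  have hP4 : ((a₁*n:ℤ):K) * (a:K) ∈ T := by
    refine Submodule.mem_span_pair.mpr ⟨0, 1, ?_⟩
    simp only [zsmul_eq_mul, hg_def, hNA_def]
    push_cast
    ring
  apply Set.Subset.antisymm
  · -- forward inclusion
    rintro x ⟨y, hy, rfl⟩
    show algebraMap (𝓞 K) K y ∈ T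
    refine Submodule.mul_induction_on hy ?_ ?_
    · intro m hm p hp
      have hmK : algebraMap (𝓞 K) K m ∈ Submodule.span ℤ
          ({(a₁:K)*τ + ((a₁*s:ℤ):K), ((a₁*n:ℤ):K)} : Set K) := by
        have : algebraMap (𝓞 K) K m ∈ algebraMap (𝓞 K) K '' (𝔫 : Set (𝓞 K)) :=
          ⟨m, hm, rfl⟩
        rwa [hbasis𝔫] at this
      have hpK : algebraMap (𝓞 K) K p ∈ Submodule.span ℤ ({τ + (e:K), (a:K)} : Set K) := by
        have : algebraMap (𝓞 K) K p ∈ algebraMap (𝓞 K) K '' (𝔪 : Set (𝓞 K)) :=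
          ⟨p, hp, rfl⟩
        rwa [h𝔪] at this
      obtain ⟨p₁, q₁, hpq₁⟩ := Submodule.mem_span_pair.mp hmK
      obtain ⟨p₂, q₂, hpq₂⟩ := Submodule.mem_span_pair.mp hpK
      rw [map_mul, ← hpq₁, ← hpq₂]
      have hexp : (p₁ • ((a₁:K)*τ + ((a₁*s:ℤ):K)) + q₁ • ((a₁*n:ℤ):K))
            * (p₂ • (τ + (e:K)) + q₂ • (a:K))
          = (p₁*p₂) • (((a₁:K)*τ + ((a₁*s:ℤ):K)) * (τ + (e:K)))
            + (p₁*q₂) • (((a₁:K)*τ + ((a₁*s:ℤ):K)) * (a:K))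
            + (q₁*p₂) • (((a₁*n:ℤ):K) * (τ + (e:K)))
            + (q₁*q₂) • (((a₁*n:ℤ):K) * (a:K)) := by
        simp only [zsmul_eq_mul]; push_cast; ring
      rw [hexp]
      exact add_mem (add_mem (add_mem (T.smul_mem _ hP1) (T.smul_mem _ hP2))
        (T.smul_mem _ hP3)) (T.smul_mem _ hP4)
    · intro x y hx hy
      rw [map_add]
      exact add_mem hx hy
  · -- backward inclusion
    intro x hx
    have himage : algebraMap (𝓞 K) K '' ((𝔫*𝔪 : Ideal (𝓞 K)) : Set (𝓞 K))
        = ((Submodule.map ((Algebra.linearMap (𝓞 K) K).restrictScalars ℤ)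
            ((𝔫*𝔪 : Ideal (𝓞 K)).restrictScalars ℤ)) : Set K) := by
      rw [Submodule.map_coe]
      rfl
    rw [himage]
    refine Submodule.span_le.mpr ?_ hx
    rintro z hz
    rcases Set.mem_insert_iff.mp hz with hz | hz
    · -- z = g
      subst hz
      refine Submodule.mem_map.mpr ⟨(α:𝓞 K)*(gu*ga) + (β:𝓞 K)*(gN*gμ) + (-γ:ℤ)*(gN*ga),
        ?_, ?_⟩
      · refine (Submodule.restrictScalars_mem _ _ _).mpr ?_
        exact add_mem (add_mem
          (Ideal.mul_mem_left _ _ (Ideal.mul_mem_mul hgu𝔫 hga𝔪))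
          (Ideal.mul_mem_left _ _ (Ideal.mul_mem_mul hgN𝔫 hgμ𝔪)))
          (Ideal.mul_mem_left _ _ (Ideal.mul_mem_mul hgN𝔫 hga𝔪))
      · show algebraMap (𝓞 K) K _ = g
        rw [map_add, map_add, map_mul, map_mul, map_mul, map_mul, map_mul, map_mul,
          map_intCast, map_intCast, map_intCast, hgu, hga, hgN, hgμ]
        rw [hg_def]
        push_cast
        linear_combination ((a₁:K)*τ)*hβαK + hγK
    · -- z = NA
      rw [Set.mem_singleton_iff] at hz
      subst hz
      refine Submodule.mem_map.mpr ⟨gN * ga, ?_, ?_⟩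
      · exact (Submodule.restrictScalars_mem _ _ _).mpr (Ideal.mul_mem_mul hgN𝔫 hga𝔪)
      · show algebraMap (𝓞 K) K _ = NA
        rw [map_mul, hgN, hga, hNA_def]
        push_cast; ring
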